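/- For every θ > 0, ∫₀^1 ( log(z)·e^{−θz} + e^{−θ/z}/(θz) ) dz = −(log θ + γ)/θ. -/

import Mathlib

open MeasureTheory
open Set Real Filter

lemma integral_log_mul_exp_neg : ∫ t in Set.Ioi (0:ℝ), Real.log t * Real.exp (-t)
    = -Real.eulerMascheroniConstant := by
  set I : ℝ := ∫ t in Set.Ioi (0:ℝ), Real.log t * Real.exp (-t)
  have hD : HasDerivAt Complex.GammaIntegral
      (∫ t : ℝ in Set.Ioi 0, (t:ℂ) ^ ((1:ℂ) - 1) * (Real.log t * Real.exp (-t))) 1 :=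
    Complex.hasDerivAt_GammaIntegral (by norm_num)
  have heq : (∫ t : ℝ in Set.Ioi 0, (t:ℂ) ^ ((1:ℂ) - 1) * (Real.log t * Real.exp (-t))) = (I : ℂ) := by
    simp only [sub_self, Complex.cpow_zero, one_mul]
    rw [show (fun t : ℝ => ((Real.log t : ℂ) * (Real.exp (-t) : ℂ)))
        = (fun t : ℝ => ((Real.log t * Real.exp (-t) : ℝ) : ℂ)) by push_cast; rfl]
    exact integral_ofReal
  rw [heq] at hD
  have hG : HasDerivAt Complex.Gamma (I : ℂ) 1 := by
    refine hD.congr_of_eventuallyEq ?_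
    have hopen : IsOpen {s : ℂ | 0 < s.re} := isOpen_lt continuous_const Complex.continuous_re
    filter_upwards [hopen.mem_nhds (by norm_num : (0:ℝ) < (1:ℂ).re)] with s hs
    exact Complex.Gamma_eq_integral hs
  have hR : HasDerivAt Real.Gamma I 1 := by
    have := hG.real_of_complex
    have hfun : Real.Gamma = fun x : ℝ => (Complex.Gamma x).re := by
      funext x; rw [Complex.Gamma_ofReal, Complex.ofReal_re]
    rw [hfun]
    simpa using this
  have := hR.unique Real.hasDerivAt_Gamma_one
  linarith

lemma integrableOn_log_mul_exp_Ioc {θ : ℝ} (hθ : 0 < θ) :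
    IntegrableOn (fun z => Real.log z * Real.exp (-θ*z)) (Set.Ioc (0:ℝ) 1) := by
  have hbound : IntegrableOn (fun z : ℝ => 2 * z ^ (-(1/2) : ℝ)) (Set.Ioc (0:ℝ) 1) := by
    have := (intervalIntegral.intervalIntegrable_rpow' (r := (-(1/2):ℝ)) (by norm_num) (a := 0) (b := 1))
    rw [intervalIntegrable_iff_integrableOn_Ioc_of_le (by norm_num)] at this
    exact this.const_mul 2
  refine Integrable.mono hbound ?_ ?_
  · refine (Measurable.aestronglyMeasurable ?_).restrict
    exact (Real.measurable_log.mul (by fun_prop))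
  · filter_upwards [ae_restrict_mem measurableSet_Ioc] with z hz
    have hz0 : 0 < z := hz.1
    have h1 : |Real.log z| ≤ 2 * z ^ (-(1/2) : ℝ) := by
      rw [abs_of_nonpos (Real.log_nonpos hz0.le hz.2)]
      have : Real.log (z ^ (-(1/2) : ℝ)) ≤ z ^ (-(1/2) : ℝ) - 1 :=
        Real.log_le_sub_one_of_pos (Real.rpow_pos_of_pos hz0 _)
      rw [Real.log_rpow hz0] at this
      nlinarith [Real.rpow_pos_of_pos hz0 (-(1/2) : ℝ)]
    have h2 : |Real.exp (-θ*z)| ≤ 1 := by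
      rw [abs_of_pos (Real.exp_pos _)]
      exact Real.exp_le_one_iff.mpr (by nlinarith)
    calc ‖Real.log z * Real.exp (-θ*z)‖ = |Real.log z| * |Real.exp (-θ*z)| := abs_mul _ _
      _ ≤ (2 * z ^ (-(1/2) : ℝ)) * 1 := by
          apply mul_le_mul h1 h2 (abs_nonneg _) (by positivity)
      _ = ‖(2 * z ^ (-(1/2) : ℝ))‖ := by
          rw [mul_one, Real.norm_eq_abs, abs_of_pos (by positivity)]

lemma integrableOn_mul_exp_Ioi {θ : ℝ} (hθ : 0 < θ) :
    IntegrableOn (fun z : ℝ => z * Real.exp (-θ*z)) (Set.Ioi (1:ℝ)) := by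
  have key : IntegrableOn (fun x : ℝ => (x/θ) * Real.exp (-x)) (Set.Ioi (θ * 1)) := by
    have h2 : IntegrableOn (fun x : ℝ => Real.exp (-x) * x ^ ((2:ℝ) - 1)) (Set.Ioi (0:ℝ)) :=
      Real.GammaIntegral_convergent (by norm_num)
    have h3 : IntegrableOn (fun x : ℝ => (x/θ) * Real.exp (-x)) (Set.Ioi (0:ℝ)) := by
      have h4 : IntegrableOn (fun x : ℝ => (1/θ) * (Real.exp (-x) * x ^ ((2:ℝ)-1))) (Set.Ioi (0:ℝ)) :=
        h2.const_mul (1/θ)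
      refine IntegrableOn.congr_fun h4 (fun x hx => ?_) measurableSet_Ioi
      have hx0 : x ≠ 0 := (mem_Ioi.mp hx).ne'
      rw [Real.rpow_sub (mem_Ioi.mp hx), Real.rpow_two, Real.rpow_one]
      field_simp
    exact h3.mono_set (Ioi_subset_Ioi (by nlinarith))
  have h5 := (integrableOn_Ioi_comp_mul_left_iff (fun x : ℝ => (x/θ) * Real.exp (-x)) 1 hθ).mpr key
  refine IntegrableOn.congr_fun h5 (fun z hz => ?_) measurableSet_Ioi
  field_simp

lemma integrableOn_log_mul_exp_Ioi {θ : ℝ} (hθ : 0 < θ) :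
    IntegrableOn (fun z => Real.log z * Real.exp (-θ*z)) (Set.Ioi (0:ℝ)) := by
  rw [← Set.Ioc_union_Ioi_eq_Ioi (zero_le_one)]
  refine (integrableOn_log_mul_exp_Ioc hθ).union ?_
  refine Integrable.mono (integrableOn_mul_exp_Ioi hθ) ?_ ?_
  · exact (Real.measurable_log.mul (by fun_prop)).aestronglyMeasurable.restrict
  · filter_upwards [ae_restrict_mem measurableSet_Ioi] with z hz
    have hz1 : (1:ℝ) < z := hz
    have hlog : |Real.log z| ≤ z := by
      rw [abs_of_nonneg (Real.log_nonneg hz1.le)]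
      linarith [Real.log_le_sub_one_of_pos (by linarith : (0:ℝ) < z)]
    rw [Real.norm_eq_abs, Real.norm_eq_abs, abs_mul, abs_mul, abs_of_pos (Real.exp_pos _),
      abs_of_pos (by linarith : (0:ℝ) < z)]
    exact mul_le_mul_of_nonneg_right hlog (Real.exp_pos _).le

lemma integral_log_mul_exp_Ioi {θ : ℝ} (hθ : 0 < θ) :
    ∫ z in Set.Ioi (0:ℝ), Real.log z * Real.exp (-θ*z)
      = -(Real.log θ + Real.eulerMascheroniConstant) / θ := by
  have base : ∫ t in Set.Ioi (0:ℝ), Real.log t * Real.exp (-t)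
      = -Real.eulerMascheroniConstant := integral_log_mul_exp_neg
  have h := integral_comp_mul_left_Ioi (fun x => Real.log (x/θ) * Real.exp (-x)) 0 hθ
  simp only [mul_zero] at h
  have hL : (∫ z in Set.Ioi (0:ℝ), Real.log (θ*z/θ) * Real.exp (-(θ*z)))
      = ∫ z in Set.Ioi (0:ℝ), Real.log z * Real.exp (-θ*z) := by
    refine setIntegral_congr_fun measurableSet_Ioi (fun z hz => ?_)
    rw [mul_div_cancel_left₀ _ hθ.ne', neg_mul]
  have h1 : IntegrableOn (fun x : ℝ => Real.log x * Real.exp (-x)) (Set.Ioi (0:ℝ)) := by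
    refine IntegrableOn.congr_fun (integrableOn_log_mul_exp_Ioi one_pos) (fun x _ => ?_)
      measurableSet_Ioi
    rw [neg_mul, one_mul]
  have h2 : IntegrableOn (fun x : ℝ => Real.log θ * Real.exp (-x)) (Set.Ioi (0:ℝ)) := by
    refine Integrable.const_mul ?_ _
    refine IntegrableOn.congr_fun (exp_neg_integrableOn_Ioi 0 one_pos) (fun x _ => ?_)
      measurableSet_Ioi
    rw [neg_mul, one_mul]
  have hR : (∫ x in Set.Ioi (0:ℝ), Real.log (x/θ) * Real.exp (-x))
      = -Real.eulerMascheroniConstant - Real.log θ := by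
    have hsplit : Set.EqOn (fun x : ℝ => Real.log (x/θ) * Real.exp (-x))
        (fun x : ℝ => Real.log x * Real.exp (-x) - Real.log θ * Real.exp (-x))
        (Set.Ioi (0:ℝ)) := fun x hx => by
      simp only
      rw [Real.log_div (mem_Ioi.mp hx).ne' hθ.ne']; ring
    rw [setIntegral_congr_fun measurableSet_Ioi hsplit, integral_sub h1 h2, base,
      integral_const_mul]
    have : (∫ x in Set.Ioi (0:ℝ), Real.exp (-x)) = 1 := integral_exp_neg_Ioi_zero
    rw [this, mul_one]
  rw [hL, hR] at h
  rw [h, smul_eq_mul]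
  field_simp
  ring

lemma integrableOn_exp_div_Ioi {θ : ℝ} (hθ : 0 < θ) :
    IntegrableOn (fun u : ℝ => Real.exp (-θ*u) / (θ*u)) (Set.Ioi (1:ℝ)) := by
  refine Integrable.mono ((exp_neg_integrableOn_Ioi 1 hθ).const_mul (1/θ)) ?_ ?_
  · exact (Measurable.div (by fun_prop) (by fun_prop)).aestronglyMeasurable.restrict
  · filter_upwards [ae_restrict_mem measurableSet_Ioi] with u hu
    have hu1 : (1:ℝ) < u := hu
    have h1 : (0:ℝ) < θ * u := by nlinarith
    rw [Real.norm_eq_abs, Real.norm_eq_abs, abs_div, abs_of_pos (Real.exp_pos _),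
      abs_of_pos h1, abs_of_pos (by positivity : (0:ℝ) < 1/θ * Real.exp (-θ*u))]
    rw [div_le_iff₀ h1]
    have : 1/θ * Real.exp (-θ*u) * (θ*u) = Real.exp (-θ*u) * u := by field_simp
    rw [this]
    nlinarith [Real.exp_pos (-θ*u)]

lemma integral_exp_div_eq_integral_log_mul_exp {θ : ℝ} (hθ : 0 < θ) :
    ∫ u in Set.Ioi (1:ℝ), Real.exp (-θ*u) / (θ*u)
      = ∫ u in Set.Ioi (1:ℝ), Real.log u * Real.exp (-θ*u) := by
  set F : ℝ → ℝ := fun u => -(Real.log u * Real.exp (-θ*u)) / θ with hF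
  have hderiv : ∀ u ∈ Set.Ici (1:ℝ), HasDerivAt F
      (Real.log u * Real.exp (-θ*u) - Real.exp (-θ*u) / (θ*u)) u := by
    intro u hu
    have hu0 : (0:ℝ) < u := lt_of_lt_of_le one_pos hu
    have h1 : HasDerivAt (fun u : ℝ => Real.log u) u⁻¹ u := Real.hasDerivAt_log hu0.ne'
    have h2 : HasDerivAt (fun u : ℝ => Real.exp (-θ*u)) (Real.exp (-θ*u) * (-θ)) u := by
      simpa [mul_comm] using ((hasDerivAt_id u).const_mul (-θ)).exp
    have h3 := (h1.mul h2).div_const θ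
    have h4 := h3.neg
    refine HasDerivAt.congr_deriv (h4.congr_of_eventuallyEq (Filter.Eventually.of_forall (fun x => ?_))) ?_
    · simp [hF]; ring
    · field_simp
      ring
  have hint : IntegrableOn (fun u : ℝ =>
      Real.log u * Real.exp (-θ*u) - Real.exp (-θ*u) / (θ*u)) (Set.Ioi (1:ℝ)) := by
    refine Integrable.sub ?_ (integrableOn_exp_div_Ioi hθ)
    exact (integrableOn_log_mul_exp_Ioi hθ).mono_set (fun x hx => mem_Ioi.mpr (lt_trans one_pos hx))
  have htend : Tendsto F atTop (nhds 0) := by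
    have hub : Tendsto (fun u : ℝ => u * Real.exp (-θ*u) / θ) atTop (nhds 0) := by
      have := tendsto_rpow_mul_exp_neg_mul_atTop_nhds_zero 1 θ hθ
      have h2 := this.div_const θ
      simp only [zero_div] at h2
      refine h2.congr' ?_
      filter_upwards [eventually_gt_atTop (0:ℝ)] with u hu
      rw [Real.rpow_one]
    have hlb : Tendsto (fun _ : ℝ => (0:ℝ)) atTop (nhds 0) := tendsto_const_nhds
    have hFneg : Tendsto (fun u => -F u) atTop (nhds 0) := by
      refine tendsto_of_tendsto_of_tendsto_of_le_of_le' hlb hub ?_ ?_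
      · filter_upwards [eventually_ge_atTop (1:ℝ)] with u hu
        simp only [hF, neg_div, neg_neg]
        have : 0 ≤ Real.log u := Real.log_nonneg hu
        positivity
      · filter_upwards [eventually_ge_atTop (1:ℝ)] with u hu
        simp only [hF, neg_div, neg_neg]
        rw [div_le_div_iff₀ hθ hθ]
        have hlu : Real.log u ≤ u := by
          linarith [Real.log_le_sub_one_of_pos (by linarith : (0:ℝ) < u)]
        nlinarith [Real.exp_pos (-θ*u), mul_le_mul_of_nonneg_right hlu (Real.exp_pos (-θ*u)).le]
    simpa using hFneg.neg
  have := integral_Ioi_of_hasDerivAt_of_tendsto' hderiv hint htend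
  rw [show F 1 = 0 by simp [hF]] at this
  rw [sub_zero] at this
  have h1' : Integrable (fun u : ℝ => Real.log u * Real.exp (-θ*u))
      (volume.restrict (Set.Ioi (1:ℝ))) :=
    (integrableOn_log_mul_exp_Ioi hθ).mono_set (fun x hx => mem_Ioi.mpr (lt_trans one_pos hx))
  have h2' : Integrable (fun u : ℝ => Real.exp (-θ*u) / (θ*u))
      (volume.restrict (Set.Ioi (1:ℝ))) := integrableOn_exp_div_Ioi hθ
  have hsub := integral_sub h1' h2'
  rw [hsub] at this
  linarith

lemma image_inv_Ioi_one : (fun x : ℝ => x⁻¹) '' Set.Ioi 1 = Set.Ioo (0:ℝ) 1 := by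
  ext y
  constructor
  · rintro ⟨x, hx, rfl⟩
    have hx1 : (1:ℝ) < x := hx
    exact ⟨inv_pos.mpr (by linarith), inv_lt_one_of_one_lt₀ hx1⟩
  · rintro ⟨hy0, hy1⟩
    exact ⟨y⁻¹, (one_lt_inv₀ hy0).mpr hy1, inv_inv y⟩

lemma hasDerivWithinAt_inv_Ioi : ∀ x ∈ Set.Ioi (1:ℝ),
    HasDerivWithinAt (fun y : ℝ => y⁻¹) (-(x^2)⁻¹) (Set.Ioi 1) x := fun x hx =>
  (hasDerivAt_inv (by intro h; rw [h] at hx; exact absurd hx (by norm_num))).hasDerivWithinAt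

lemma abs_deriv_smul_eq {θ : ℝ} (hθ : 0 < θ) : ∀ x ∈ Set.Ioi (1:ℝ),
    |(-(x^2)⁻¹)| • (Real.exp (-θ / x⁻¹) / (θ * x⁻¹)) = Real.exp (-θ*x) / (θ*x) := by
  intro x hx
  have hx1 : (1:ℝ) < x := hx
  have hx0 : x ≠ 0 := by positivity
  rw [smul_eq_mul, abs_neg, abs_of_pos (by positivity : (0:ℝ) < (x^2)⁻¹)]
  rw [div_inv_eq_mul]
  field_simp

lemma integrableOn_exp_div_Ioo {θ : ℝ} (hθ : 0 < θ) :
    IntegrableOn (fun z : ℝ => Real.exp (-θ / z) / (θ * z)) (Set.Ioo (0:ℝ) 1) := by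
  rw [← image_inv_Ioi_one]
  rw [integrableOn_image_iff_integrableOn_abs_deriv_smul measurableSet_Ioi
    hasDerivWithinAt_inv_Ioi (inv_injective.injOn)]
  exact IntegrableOn.congr_fun (integrableOn_exp_div_Ioi hθ)
    (fun x hx => (abs_deriv_smul_eq hθ x hx).symm) measurableSet_Ioi

lemma integral_exp_div_Ioc {θ : ℝ} (hθ : 0 < θ) :
    ∫ z in Set.Ioc (0:ℝ) 1, Real.exp (-θ / z) / (θ * z)
      = ∫ x in Set.Ioi (1:ℝ), Real.exp (-θ*x) / (θ*x) := by
  rw [integral_Ioc_eq_integral_Ioo, ← image_inv_Ioi_one,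
    integral_image_eq_integral_abs_deriv_smul measurableSet_Ioi hasDerivWithinAt_inv_Ioi
      (inv_injective.injOn)]
  exact setIntegral_congr_fun measurableSet_Ioi (abs_deriv_smul_eq hθ)

/-- For every `θ > 0`, `∫₀^1 (log(z) e^{-θz} + e^{-θ/z}/(θz)) dz = -(log θ + γ)/θ`. -/
theorem integral_log_exp_identity (θ : ℝ) (hθ : 0 < θ) :
    ∫ z in Set.Ioc (0 : ℝ) 1,
        (Real.log z * Real.exp (-θ * z) + Real.exp (-θ / z) / (θ * z)) =
      -(Real.log θ + Real.eulerMascheroniConstant) / θ := by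
  have hA : IntegrableOn (fun z => Real.log z * Real.exp (-θ*z)) (Set.Ioc (0:ℝ) 1) :=
    integrableOn_log_mul_exp_Ioc hθ
  have hB : IntegrableOn (fun z : ℝ => Real.exp (-θ / z) / (θ * z)) (Set.Ioc (0:ℝ) 1) := by
    rw [integrableOn_Ioc_iff_integrableOn_Ioo]
    exact integrableOn_exp_div_Ioo hθ
  rw [integral_add hA hB, integral_exp_div_Ioc hθ,
    integral_exp_div_eq_integral_log_mul_exp hθ]
  have hsplit : ∫ z in Set.Ioi (0:ℝ), Real.log z * Real.exp (-θ*z)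
      = (∫ z in Set.Ioc (0:ℝ) 1, Real.log z * Real.exp (-θ*z))
        + ∫ z in Set.Ioi (1:ℝ), Real.log z * Real.exp (-θ*z) := by
    rw [← setIntegral_union (Set.Ioc_disjoint_Ioi le_rfl) measurableSet_Ioi hA
      ((integrableOn_log_mul_exp_Ioi hθ).mono_set (fun x hx => mem_Ioi.mpr (lt_trans one_pos hx))),
      Set.Ioc_union_Ioi_eq_Ioi zero_le_one]
  rw [← hsplit, integral_log_mul_exp_Ioi hθ]
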